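/- Let A₁ and A₂ be unital associative ℂ-algebras each of countable dimension over ℂ. If W₁ is a semisimple A₁-module and W₂ is a semisimple A₂-module, then W₁ ⊗_ℂ W₂ is a semisimple module over A₁ ⊗_ℂ A₂. (Algebraic core of the 'if' direction of Theorem 6.3 of the paper: if every strongly graded module for each tensor factor is completely reducible, then every strongly graded module for the tensor product strongly graded vertex algebra is completely reducible; the key step is that a tensor product of direct sums of irreducibles is a direct sum of tensor products of irreducibles, each of which is irreducible.) -/

import Mathlib

open Cardinal TensorProduct

section AuxiliaryLemmas
open Polynomial



/-- In a `ℂ`-algebra with no nonzero zero-divisors issues (all nonzero elements invertible),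
an element annihilated by a nonzero polynomial is a scalar. -/
lemma eq_scalar_of_aeval_eq_zero' {D : Type*} [Ring D] [Algebra ℂ D] [Nontrivial D]
    (hunit : ∀ x : D, x ≠ 0 → ∃ y : D, y * x = 1 ∧ x * y = 1) (d : D) :
    ∀ (n : ℕ) (p : ℂ[X]), p.natDegree ≤ n → p ≠ 0 → aeval d p = 0 →
      ∃ c : ℂ, d = algebraMap ℂ D c := by
  intro n
  induction n with
  | zero =>
    intro p hdeg hp hev
    exfalso
    rw [Polynomial.eq_C_of_natDegree_eq_zero (Nat.le_zero.mp hdeg)] at hev hp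
    rw [aeval_C] at hev
    exact hp (by simpa using (map_eq_zero_iff (algebraMap ℂ D)
      (algebraMap ℂ D).injective).mp hev ▸ (by simp))
  | succ n ih =>
    intro p hdeg hp hev
    by_cases h0 : p.natDegree = 0
    · exfalso
      rw [Polynomial.eq_C_of_natDegree_eq_zero h0] at hev hp
      rw [aeval_C] at hev
      have : p.coeff 0 = 0 := by
        have := (map_eq_zero_iff (algebraMap ℂ D) (algebraMap ℂ D).injective).mp hev
        exact this
      simp [this] at hp
    · obtain ⟨c, hc⟩ := IsAlgClosed.exists_root p (fun hdeg0 => h0 (natDegree_eq_zero_iff_degree_le_zero.mpr (le_of_eq hdeg0)))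
      have hfac : (X - C c) * (p / (X - C c)) = p := (mul_div_eq_iff_isRoot).mpr hc
      set q := p / (X - C c) with hq
      have hqne : q ≠ 0 := by
        intro h; rw [h, mul_zero] at hfac; exact hp hfac.symm
      have hdq : q.natDegree ≤ n := by
        have := congrArg Polynomial.natDegree hfac
        rw [Polynomial.natDegree_mul (X_sub_C_ne_zero c) hqne, natDegree_X_sub_C] at this
        omega
      have hev2 : (d - algebraMap ℂ D c) * aeval d q = 0 := by
        have := congrArg (aeval d) hfac
        rw [map_mul, hev] at this
        simpa using this
      by_cases hq0 : aeval d q = 0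
      · exact ih q hdq hqne hq0
      · -- d - c must be zero
        by_contra hne
        push_neg at hne
        have hd : d - algebraMap ℂ D c ≠ 0 := by
          intro h
          exact (hne c) (by rwa [sub_eq_zero] at h)
        obtain ⟨y, hy, _⟩ := hunit _ hd
        have : aeval d q = 0 := by
          calc aeval d q = (y * (d - algebraMap ℂ D c)) * aeval d q := by rw [hy, one_mul]
          _ = y * ((d - algebraMap ℂ D c) * aeval d q) := by rw [mul_assoc]
          _ = 0 := by rw [hev2, mul_zero]
        exact hq0 this


lemma complex_aleph0_lt : (ℵ₀ : Cardinal) < Cardinal.mk ℂ := by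
  have h1 : Cardinal.mk ℝ ≤ Cardinal.mk ℂ :=
    Cardinal.mk_le_of_injective (f := fun r : ℝ => (r : ℂ)) (fun a b h => Complex.ofReal_injective h)
  calc (ℵ₀ : Cardinal) < Cardinal.continuum := Cardinal.aleph0_lt_continuum
  _ = Cardinal.mk ℝ := Cardinal.mk_real.symm
  _ ≤ Cardinal.mk ℂ := h1

/-- Dixmier's lemma: in a `ℂ`-algebra of countable dimension in which every nonzero
element is invertible, every element is a scalar. -/
lemma dixmier {D : Type*} [Ring D] [Algebra ℂ D] [Nontrivial D]
    (hunit : ∀ x : D, x ≠ 0 → ∃ y : D, y * x = 1 ∧ x * y = 1)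
    (hD : Module.rank ℂ D ≤ ℵ₀) (d : D) : ∃ c : ℂ, d = algebraMap ℂ D c := by
  classical
  by_cases halg : IsAlgebraic ℂ d
  · obtain ⟨p, hp, hev⟩ := halg
    exact eq_scalar_of_aeval_eq_zero' hunit d p.natDegree p le_rfl hp hev
  · exfalso
    -- every nonzero polynomial is nonvanishing at d
    have hnv : ∀ p : ℂ[X], p ≠ 0 → aeval d p ≠ 0 := fun p hp hev => halg ⟨p, hp, hev⟩
    have hsub : ∀ c : ℂ, d - algebraMap ℂ D c ≠ 0 := by
      intro c
      have := hnv (X - C c) (X_sub_C_ne_zero c)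
      simpa using this
    -- choose inverses
    choose inv hinv _ using fun c : ℂ => hunit _ (hsub c)
    -- the family of inverses is linearly independent
    have hli : LinearIndependent ℂ inv := by
      rw [linearIndependent_iff']
      intro s g hsum i hi
      by_contra hgi
      -- multiply the relation by ∏ (d - c)
      set P : ℂ[X] := ∏ c ∈ s, (X - C c) with hP
      have key : ∀ c ∈ s, inv c * aeval d P = aeval d (∏ c' ∈ s.erase c, (X - C c')) := by
        intro c hc
        have : P = (X - C c) * ∏ c' ∈ s.erase c, (X - C c') := (Finset.mul_prod_erase s _ hc).symm
        rw [this, map_mul]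
        have : aeval d (X - C c) = d - algebraMap ℂ D c := by simp
        rw [this, ← mul_assoc, hinv c, one_mul]
      have hrel : aeval d (∑ c ∈ s, C (g c) * ∏ c' ∈ s.erase c, (X - C c')) = 0 := by
        rw [map_sum]
        have : ∀ c ∈ s, aeval d (C (g c) * ∏ c' ∈ s.erase c, (X - C c')) =
            g c • (inv c * aeval d P) := by
          intro c hc
          rw [key c hc, map_mul, aeval_C, Algebra.smul_def]
        rw [Finset.sum_congr rfl this]
        have : ∑ c ∈ s, g c • (inv c * aeval d P) = (∑ c ∈ s, g c • inv c) * aeval d P := by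
          rw [Finset.sum_mul]
          exact Finset.sum_congr rfl fun c _ => (smul_mul_assoc _ _ _).symm
        rw [this, hsum, zero_mul]
      have hq0 : (∑ c ∈ s, C (g c) * ∏ c' ∈ s.erase c, (X - C c')) = 0 := by
        by_contra h
        exact hnv _ h hrel
      -- evaluate at i
      have := congrArg (Polynomial.eval i) hq0
      rw [Polynomial.eval_finset_sum] at this
      simp only [Polynomial.eval_mul, Polynomial.eval_C, Polynomial.eval_prod,
        Polynomial.eval_sub, Polynomial.eval_X] at this
      rw [Finset.sum_eq_single i] at this
      · have hne : (∏ c' ∈ s.erase i, (i - c')) ≠ 0 := by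
          rw [Finset.prod_ne_zero_iff]
          intro c' hc'
          have := Finset.ne_of_mem_erase hc'
          intro h
          exact this (by linear_combination -h)
        simp at this
        rcases this with h | h
        · exact hgi h
        · exact hne h
      · intro c hc hci
        have : (∏ c' ∈ s.erase c, (i - c')) = 0 := by
          apply Finset.prod_eq_zero (Finset.mem_erase.mpr ⟨fun h => hci h.symm, hi⟩)
          ring
        rw [this, mul_zero]
      · intro h; exact absurd hi h
    have := hli.cardinal_lift_le_rank
    have hle : Cardinal.mk ℂ ≤ ℵ₀ := by
      have h2 := this.trans (Cardinal.lift_le.mpr hD)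
      rw [show ((ℵ₀ : Cardinal).lift = (ℵ₀ : Cardinal)) from Cardinal.lift_aleph0] at h2
      exact Cardinal.lift_le.mp (by rw [Cardinal.lift_aleph0]; exact h2)
    exact absurd hle (not_le.mpr complex_aleph0_lt)


section EndScalar
variable {A M : Type*} [Ring A] [Algebra ℂ A] [AddCommGroup M] [Module ℂ M] [Module A M]
  [IsScalarTower ℂ A M]

lemma aux_smulCommClass : SMulCommClass A ℂ M := by
  constructor
  intro a c m
  have h1 : c • m = (c • (1 : A)) • m := by rw [smul_assoc, one_smul]
  rw [h1, ← mul_smul, mul_smul_comm, mul_one, ← smul_assoc]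

lemma end_scalar [IsSimpleModule A M] (hA : Module.rank ℂ A ≤ ℵ₀) (f : Module.End A M) :
    ∃ c : ℂ, f = c • (LinearMap.id : M →ₗ[A] M) := by
  haveI : SMulCommClass A ℂ M := aux_smulCommClass
  haveI : Nontrivial M := IsSimpleModule.nontrivial A M
  obtain ⟨m₀, hm₀⟩ := exists_ne (0 : M)
  -- rank of M over ℂ is countable
  have hrankM : Module.rank ℂ M ≤ ℵ₀ := by
    let f := (LinearMap.toSpanSingleton A M m₀).restrictScalars ℂ
    have hf : Function.Surjective f := IsSimpleModule.toSpanSingleton_surjective A hm₀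
    let e := f.quotKerEquivOfSurjective hf
    have hq : Module.rank ℂ (A ⧸ LinearMap.ker f) ≤ ℵ₀ :=
      (rank_quotient_le _).trans hA
    rw [← Cardinal.lift_le_aleph0, ← e.lift_rank_eq, Cardinal.lift_le_aleph0]
    exact hq
  -- rank of End over ℂ is countable
  have hrankE : Module.rank ℂ (Module.End A M) ≤ ℵ₀ := by
    let ev : Module.End A M →ₗ[ℂ] M :=
      { toFun := fun g : Module.End A M => g m₀,
        map_add' := fun g h => rfl,
        map_smul' := fun c g => rfl }
    have hinj : Function.Injective ev := by
      intro g h hgh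
      by_contra hne
      have hg0 : g - h ≠ 0 := sub_ne_zero.mpr hne
      have hi := LinearMap.injective_of_ne_zero hg0
      apply hm₀
      apply hi
      have : g m₀ = h m₀ := hgh
      simp [this]
    let e := LinearEquiv.ofInjective ev hinj
    have hq : Module.rank ℂ (LinearMap.range ev) ≤ ℵ₀ :=
      (Submodule.rank_le _).trans hrankM
    rw [← Cardinal.lift_le_aleph0, e.lift_rank_eq, Cardinal.lift_le_aleph0]
    exact hq
  haveI : Nontrivial (Module.End A M) := by
    refine ⟨0, 1, fun h => hm₀ ?_⟩
    have := congrArg (fun g : Module.End A M => g m₀) h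
    simpa using this.symm
  have hunit : ∀ g : Module.End A M, g ≠ 0 → ∃ y, y * g = 1 ∧ g * y = 1 := by
    intro g hg
    have hb := LinearMap.bijective_of_ne_zero hg
    let e := LinearEquiv.ofBijective g hb
    refine ⟨(e.symm : M →ₗ[A] M), ?_, ?_⟩
    · ext x
      exact e.symm_apply_apply x
    · ext x
      exact e.apply_symm_apply x
  obtain ⟨c, hc⟩ := dixmier hunit hrankE f
  exact ⟨c, by rw [hc, Module.algebraMap_end_eq_smul_id]⟩

end EndScalar

section Density
variable {A M : Type*} [Ring A] [Algebra ℂ A] [AddCommGroup M] [Module ℂ M] [Module A M]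
  [IsScalarTower ℂ A M]

/-- Jacobson-density style lemma: over a countable-dimensional algebra, if every element of `A`
annihilating a finite set `s` also annihilates `t`, then `t` is in the `ℂ`-span of `s`. -/
lemma density [IsSimpleModule A M] (hA : Module.rank ℂ A ≤ ℵ₀) (s : Finset M) :
    ∀ t : M, (∀ a : A, (∀ u ∈ s, a • u = 0) → a • t = 0) → t ∈ Submodule.span ℂ (s : Set M) := by
  classical
  haveI : SMulCommClass A ℂ M := aux_smulCommClass
  induction s using Finset.induction with
  | empty =>
    intro t h
    have := h 1 (by simp)
    rw [one_smul] at this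
    simp [this]
  | @insert t₂ s ht₂ ih =>
    intro t h
    by_cases hc : t₂ ∈ Submodule.span ℂ (s : Set M)
    · refine Submodule.span_mono (by simp [Finset.coe_insert, Set.subset_insert]) (ih t ?_)
      intro a ha
      have hkill : ∀ x ∈ Submodule.span ℂ (s : Set M), a • x = 0 := by
        intro x hx
        induction hx using Submodule.span_induction with
        | mem x hx => exact ha x hx
        | zero => simp
        | add x y _ _ hx hy => rw [smul_add, hx, hy, add_zero]
        | smul c x _ hx => rw [smul_comm, hx, smul_zero]
      refine h a ?_
      intro u hu
      rcases Finset.mem_insert.mp hu with rfl | hu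
      · exact hkill _ hc
      · exact ha u hu
    · -- the annihilator ideal of s
      set I : Submodule A A := ⨅ u ∈ s, LinearMap.ker (LinearMap.toSpanSingleton A M u) with hI
      have hmemI : ∀ a : A, a ∈ I ↔ ∀ u ∈ s, a • u = 0 := by
        intro a
        simp [hI, Submodule.mem_iInf, LinearMap.mem_ker, LinearMap.toSpanSingleton_apply]
      -- there is a₀ ∈ I with a₀ • t₂ ≠ 0
      obtain ⟨a₀, ha₀I, ha₀⟩ : ∃ a₀ : A, (∀ u ∈ s, a₀ • u = 0) ∧ a₀ • t₂ ≠ 0 := by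
        by_contra hno
        push_neg at hno
        exact hc (ih t₂ fun a ha => hno a ha)
      let ψ : I →ₗ[A] M := (LinearMap.toSpanSingleton A M t₂).comp I.subtype
      let φ : I →ₗ[A] M := (LinearMap.toSpanSingleton A M t).comp I.subtype
      have hψ : Function.Surjective ψ := by
        have hr : LinearMap.range ψ ≠ ⊥ := by
          rw [Submodule.ne_bot_iff]
          exact ⟨a₀ • t₂, ⟨⟨a₀, (hmemI a₀).mpr ha₀I⟩, rfl⟩, ha₀⟩
        rw [← LinearMap.range_eq_top]
        exact (eq_bot_or_eq_top (LinearMap.range ψ)).resolve_left hr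
      have hker : LinearMap.ker ψ ≤ LinearMap.ker φ := by
        rintro ⟨a, haI⟩ hk
        simp only [LinearMap.mem_ker, ψ, φ, LinearMap.comp_apply, Submodule.subtype_apply,
          LinearMap.toSpanSingleton_apply] at hk ⊢
        refine h a ?_
        intro u hu
        rcases Finset.mem_insert.mp hu with rfl | hu
        · exact hk
        · exact (hmemI a).mp haI u hu
      let e := LinearMap.quotKerEquivOfSurjective ψ hψ
      let g : M →ₗ[A] M := ((LinearMap.ker ψ).liftQ φ hker).comp e.symm.toLinearMap
      have hgψ : ∀ a : I, g (ψ a) = φ a := by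
        intro a
        have he : e ((LinearMap.ker ψ).mkQ a) = ψ a := rfl
        have : e.symm (ψ a) = (LinearMap.ker ψ).mkQ a := by
          rw [← he, LinearEquiv.symm_apply_apply]
        simp only [g, LinearMap.comp_apply, LinearEquiv.coe_toLinearMap, this]
        exact Submodule.liftQ_apply _ φ a
      obtain ⟨c, hcg⟩ := end_scalar hA g
      -- ∀ a ∈ I, a • (t - c • t₂) = 0
      have hann : ∀ a : A, (∀ u ∈ s, a • u = 0) → a • (t - c • t₂) = 0 := by
        intro a ha
        have haI : a ∈ I := (hmemI a).mpr ha
        have h1 : g (a • t₂) = a • t := hgψ ⟨a, haI⟩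
        rw [hcg] at h1
        simp only [LinearMap.smul_apply, LinearMap.id_apply] at h1
        rw [smul_sub, ← h1, smul_comm]
        simp
      have := ih (t - c • t₂) hann
      have h2 : t = (t - c • t₂) + c • t₂ := by abel
      rw [h2]
      refine Submodule.add_mem _ (Submodule.span_mono (by simp [Finset.coe_insert, Set.subset_insert]) this) ?_
      refine Submodule.smul_mem _ _ (Submodule.subset_span ?_)
      simp
end Density


lemma tmul_ne_zero'' {M N : Type*} [AddCommGroup M] [Module ℂ M] [AddCommGroup N] [Module ℂ N]
    {m : M} {n : N} (hm : m ≠ 0) (hn : n ≠ 0) : m ⊗ₜ[ℂ] n ≠ (0 : M ⊗[ℂ] N) := by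
  intro h
  obtain ⟨φ, hφ⟩ : ∃ φ : Module.Dual ℂ M, φ m ≠ 0 := by
    by_contra hno; push_neg at hno
    exact hm ((Module.forall_dual_apply_eq_zero_iff ℂ m).mp hno)
  have h2 := congrArg (fun z => (TensorProduct.lid ℂ N) (LinearMap.rTensor N φ z)) h
  simp only [LinearMap.rTensor_tmul, TensorProduct.lid_tmul, map_zero] at h2
  exact (smul_ne_zero hφ hn) h2

section Tensor
variable {A₁ A₂ W₁ W₂ : Type*}
    [Ring A₁] [Algebra ℂ A₁] [Ring A₂] [Algebra ℂ A₂]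
    [AddCommGroup W₁] [Module ℂ W₁] [Module A₁ W₁] [IsScalarTower ℂ A₁ W₁]
    [AddCommGroup W₂] [Module ℂ W₂] [Module A₂ W₂] [IsScalarTower ℂ A₂ W₂]
    [Module (A₁ ⊗[ℂ] A₂) (W₁ ⊗[ℂ] W₂)]

variable (hsmul : ∀ (a₁ : A₁) (a₂ : A₂) (w₁ : W₁) (w₂ : W₂),
      (a₁ ⊗ₜ[ℂ] a₂) • (w₁ ⊗ₜ[ℂ] w₂) = (a₁ • w₁) ⊗ₜ[ℂ] (a₂ • w₂))

include hsmul

lemma algmap_smul (c : ℂ) (x : W₁ ⊗[ℂ] W₂) :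
    (algebraMap ℂ (A₁ ⊗[ℂ] A₂) c) • x = c • x := by
  induction x using TensorProduct.induction_on with
  | zero => simp
  | tmul w₁ w₂ =>
    rw [Algebra.TensorProduct.algebraMap_apply, hsmul, algebraMap_smul, one_smul,
      TensorProduct.smul_tmul']
  | add x y hx hy => rw [smul_add, smul_add, hx, hy]

lemma tower_aux : IsScalarTower ℂ (A₁ ⊗[ℂ] A₂) (W₁ ⊗[ℂ] W₂) := by
  constructor
  intro c r x
  rw [Algebra.smul_def, mul_smul, algmap_smul hsmul]

/-- The submodule of `W₁ ⊗ W₂` generated by pure tensors from `S` and `T`. -/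
def PT (S : Submodule A₁ W₁) (T : Submodule A₂ W₂) :
    Submodule (A₁ ⊗[ℂ] A₂) (W₁ ⊗[ℂ] W₂) where
  carrier := Submodule.span ℂ (Set.image2 (· ⊗ₜ[ℂ] ·) (S : Set W₁) (T : Set W₂))
  add_mem' := fun h1 h2 => Submodule.add_mem _ h1 h2
  zero_mem' := Submodule.zero_mem _
  smul_mem' := by
    intro r x hx
    simp only [SetLike.mem_coe] at hx ⊢
    induction r using TensorProduct.induction_on with
    | zero => rw [zero_smul]; exact Submodule.zero_mem _
    | tmul a₁ a₂ =>
      induction hx using Submodule.span_induction with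
      | mem y hy =>
        obtain ⟨s, hs, t, ht, rfl⟩ := hy
        rw [hsmul]
        exact Submodule.subset_span (Set.mem_image2_of_mem (S.smul_mem a₁ hs) (T.smul_mem a₂ ht))
      | zero => rw [smul_zero]; exact Submodule.zero_mem _
      | add y z hy hz hy' hz' => rw [smul_add]; exact Submodule.add_mem _ hy' hz'
      | smul c y hy hy' =>
        rw [← algmap_smul hsmul c y, ← mul_smul, ← Algebra.commutes, mul_smul, algmap_smul hsmul]
        exact Submodule.smul_mem _ c hy'
    | add r r' hr hr' => rw [add_smul]; exact Submodule.add_mem _ hr hr'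

lemma mem_PT {S : Submodule A₁ W₁} {T : Submodule A₂ W₂} {x : W₁ ⊗[ℂ] W₂} :
    x ∈ PT hsmul S T ↔
      x ∈ Submodule.span ℂ (Set.image2 (· ⊗ₜ[ℂ] ·) (S : Set W₁) (T : Set W₂)) := Iff.rfl

lemma PT_le_of_subset {S : Submodule A₁ W₁} {T : Submodule A₂ W₂}
    {N : Submodule (A₁ ⊗[ℂ] A₂) (W₁ ⊗[ℂ] W₂)}
    (hN : Set.image2 (· ⊗ₜ[ℂ] ·) (S : Set W₁) (T : Set W₂) ⊆ N) : PT hsmul S T ≤ N := by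
  haveI := tower_aux hsmul
  intro x hx
  exact (Submodule.span_le (p := N.restrictScalars ℂ)).mpr hN hx

lemma PT_repr {S : Submodule A₁ W₁} {T : Submodule A₂ W₂} {x : W₁ ⊗[ℂ] W₂}
    (hx : x ∈ PT hsmul S T) :
    ∃ (n : ℕ) (sv : Fin n → W₁) (tv : Fin n → W₂), (∀ i, sv i ∈ S) ∧ (∀ i, tv i ∈ T) ∧
      LinearIndependent ℂ tv ∧ x = ∑ i, sv i ⊗ₜ[ℂ] tv i := by
  classical
  rw [mem_PT] at hx
  have hfin : ∃ (F₁ : Finset W₁) (F₂ : Finset W₂), ↑F₁ ⊆ (S : Set W₁) ∧ ↑F₂ ⊆ (T : Set W₂) ∧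
      x ∈ Submodule.span ℂ (Set.image2 (· ⊗ₜ[ℂ] ·) (F₁ : Set W₁) (F₂ : Set W₂)) := by
    induction hx using Submodule.span_induction with
    | mem y hy =>
      obtain ⟨s, hs, t, ht, rfl⟩ := hy
      exact ⟨{s}, {t}, by simpa using hs, by simpa using ht,
        Submodule.subset_span (by simp [Set.mem_image2])⟩
    | zero => exact ⟨∅, ∅, by simp, by simp, by simp⟩
    | add y z hy hz ihy ihz =>
      obtain ⟨F₁, F₂, h1, h2, h3⟩ := ihy
      obtain ⟨G₁, G₂, g1, g2, g3⟩ := ihz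
      refine ⟨F₁ ∪ G₁, F₂ ∪ G₂, ?_, ?_, Submodule.add_mem _ ?_ ?_⟩
      · rw [Finset.coe_union]; exact Set.union_subset h1 g1
      · rw [Finset.coe_union]; exact Set.union_subset h2 g2
      · refine Submodule.span_mono (Set.image2_subset ?_ ?_) h3 <;>
          simp [Finset.coe_union, Set.subset_union_left, Set.subset_union_right]
      · refine Submodule.span_mono (Set.image2_subset ?_ ?_) g3 <;>
          simp [Finset.coe_union, Set.subset_union_left, Set.subset_union_right]
    | smul c y hy ihy =>
      obtain ⟨F₁, F₂, h1, h2, h3⟩ := ihy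
      exact ⟨F₁, F₂, h1, h2, Submodule.smul_mem _ c h3⟩
  obtain ⟨F₁, F₂, hF₁, hF₂, hx2⟩ := hfin
  set V : Submodule ℂ W₂ := Submodule.span ℂ (F₂ : Set W₂) with hV
  set n := Module.finrank ℂ V with hn
  set b := Module.finBasis ℂ V with hb
  set tv : Fin n → W₂ := fun j => (b j : W₂) with htv
  have htvT : ∀ j, tv j ∈ T := by
    intro j
    have hVT : V ≤ T.restrictScalars ℂ := Submodule.span_le.mpr hF₂
    exact hVT (b j).2
  have htvli : LinearIndependent ℂ tv :=
    (b.linearIndependent).map' V.subtype (Submodule.ker_subtype V)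
  let Φ : (Fin n → ↥S) →ₗ[ℂ] W₁ ⊗[ℂ] W₂ :=
    { toFun := fun f => ∑ j, (f j : W₁) ⊗ₜ[ℂ] tv j,
      map_add' := fun f g => by
        rw [← Finset.sum_add_distrib]
        refine Finset.sum_congr rfl fun j _ => ?_
        have h : ((f + g) j : W₁) = (f j : W₁) + (g j : W₁) := rfl
        rw [h, TensorProduct.add_tmul],
      map_smul' := fun c f => by
        simp only [RingHom.id_apply]
        rw [Finset.smul_sum]
        refine Finset.sum_congr rfl fun j _ => ?_
        have h : ((c • f) j : W₁) = c • (f j : W₁) := rfl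
        rw [h, TensorProduct.smul_tmul'] }
  have hrange : x ∈ LinearMap.range Φ := by
    refine Submodule.span_le.mpr ?_ hx2
    rintro _ ⟨s, hs, t, ht, rfl⟩
    have htV : t ∈ V := Submodule.subset_span ht
    have hsS : s ∈ S := hF₁ hs
    refine ⟨fun j => (b.repr ⟨t, htV⟩ j) • (⟨s, hsS⟩ : ↥S), ?_⟩
    show (∑ j, ((((b.repr ⟨t, htV⟩ j) • (⟨s, hsS⟩ : ↥S)) : ↥S) : W₁) ⊗ₜ[ℂ] tv j) = s ⊗ₜ[ℂ] t
    have hrw : ∀ j : Fin n, ((((b.repr ⟨t, htV⟩ j) • (⟨s, hsS⟩ : ↥S)) : ↥S) : W₁) ⊗ₜ[ℂ] tv j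
        = s ⊗ₜ[ℂ] ((b.repr ⟨t, htV⟩ j) • tv j) := by
      intro j
      rw [Submodule.coe_smul_of_tower, TensorProduct.smul_tmul]
    rw [Finset.sum_congr rfl fun j _ => hrw j, ← TensorProduct.tmul_sum]
    congr 1
    have hsum := b.sum_repr ⟨t, htV⟩
    have := congrArg (V.subtype) hsum
    rw [map_sum] at this
    simpa using this
  obtain ⟨f, hf⟩ := hrange
  exact ⟨n, fun j => (f j : W₁), tv, fun j => (f j).2, htvT, htvli, hf.symm⟩

lemma PT_isAtom (hA₁ : Module.rank ℂ A₁ ≤ ℵ₀) (hA₂ : Module.rank ℂ A₂ ≤ ℵ₀)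
    (S : Submodule A₁ W₁) (T : Submodule A₂ W₂)
    (hS : IsSimpleModule A₁ ↥S) (hT : IsSimpleModule A₂ ↥T) :
    IsAtom (PT hsmul S T) := by
  classical
  haveI := hS; haveI := hT
  have key : ∀ x ∈ PT hsmul S T, x ≠ 0 →
      PT hsmul S T ≤ Submodule.span (A₁ ⊗[ℂ] A₂) {x} := by
    intro x hx hx0
    obtain ⟨n, sv, tv, hsvS, htvT, hli, hxeq⟩ := PT_repr hsmul hx
    obtain ⟨j₀, hj₀⟩ : ∃ j, sv j ≠ 0 := by
      by_contra hno; push_neg at hno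
      apply hx0
      rw [hxeq]
      refine Finset.sum_eq_zero fun j _ => ?_
      rw [hno j, TensorProduct.zero_tmul]
    set tt : Fin n → ↥T := fun j => ⟨tv j, htvT j⟩ with htt
    set ss : Finset ↥T := (Finset.univ.erase j₀).image tt with hss
    obtain ⟨a, haann, hat⟩ : ∃ a : A₂, (∀ u ∈ ss, a • u = 0) ∧ a • tt j₀ ≠ 0 := by
      by_contra hno; push_neg at hno
      have hspan := density (A := A₂) (M := ↥T) hA₂ ss (tt j₀) hno
      have hmap := Submodule.mem_map_of_mem (f := (T.subtype).restrictScalars ℂ) hspan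
      rw [Submodule.map_span] at hmap
      have himg : ((T.subtype).restrictScalars ℂ) '' ↑ss = tv '' ↑(Finset.univ.erase j₀) := by
        rw [hss, Finset.coe_image, ← Set.image_comp]
        rfl
      rw [himg] at hmap
      have hj₀mem : j₀ ∉ (↑(Finset.univ.erase j₀) : Set (Fin n)) := by simp
      exact hli.notMem_span_image hj₀mem hmap
    have hvT : a • tv j₀ ∈ T := T.smul_mem a (htvT j₀)
    have hv0 : a • tv j₀ ≠ 0 := by
      intro h
      apply hat
      ext
      simpa using h
    have hy : ((1 : A₁) ⊗ₜ[ℂ] a) • x = sv j₀ ⊗ₜ[ℂ] (a • tv j₀) := by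
      rw [hxeq, Finset.smul_sum]
      rw [Finset.sum_eq_single j₀]
      · rw [hsmul, one_smul]
      · intro j _ hj
        rw [hsmul, one_smul]
        have hz : a • tv j = 0 := by
          have hjss : tt j ∈ ss :=
            Finset.mem_image_of_mem tt (Finset.mem_erase.mpr ⟨hj, Finset.mem_univ j⟩)
          have h0 := haann _ hjss
          have : ((a • tt j : ↥T) : W₂) = (0 : W₂) := by rw [h0]; rfl
          simpa using this
        rw [hz, TensorProduct.tmul_zero]
      · intro h; exact absurd (Finset.mem_univ j₀) h
    have hyx : sv j₀ ⊗ₜ[ℂ] (a • tv j₀) ∈ Submodule.span (A₁ ⊗[ℂ] A₂) {x} := by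
      rw [← hy]
      exact Submodule.smul_mem _ _ (Submodule.mem_span_singleton_self x)
    refine PT_le_of_subset hsmul ?_
    rintro _ ⟨s', hs', t', ht', rfl⟩
    have hu0 : (⟨sv j₀, hsvS j₀⟩ : ↥S) ≠ 0 := by
      intro h; exact hj₀ (by simpa using congrArg (fun z : ↥S => (z : W₁)) h)
    have hw0 : (⟨a • tv j₀, hvT⟩ : ↥T) ≠ 0 := by
      intro h; exact hv0 (by simpa using congrArg (fun z : ↥T => (z : W₂)) h)
    obtain ⟨a₁, ha₁⟩ := IsSimpleModule.toSpanSingleton_surjective A₁ hu0 (⟨s', hs'⟩ : ↥S)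
    obtain ⟨a₂', ha₂'⟩ := IsSimpleModule.toSpanSingleton_surjective A₂ hw0 (⟨t', ht'⟩ : ↥T)
    have ha₁' : a₁ • sv j₀ = s' := by
      have := congrArg (fun z : ↥S => (z : W₁)) ha₁
      simpa [LinearMap.toSpanSingleton_apply] using this
    have ha₂'' : a₂' • (a • tv j₀) = t' := by
      have := congrArg (fun z : ↥T => (z : W₂)) ha₂'
      simpa [LinearMap.toSpanSingleton_apply] using this
    have heq : s' ⊗ₜ[ℂ] t' = (a₁ ⊗ₜ[ℂ] a₂') • (sv j₀ ⊗ₜ[ℂ] (a • tv j₀)) := by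
      rw [hsmul, ha₁', ha₂'']
    have hfin : s' ⊗ₜ[ℂ] t' ∈ Submodule.span (A₁ ⊗[ℂ] A₂) {x} := by
      rw [heq]
      exact Submodule.smul_mem _ _ hyx
    exact hfin
  have hne : ∃ y ∈ PT hsmul S T, y ≠ (0 : W₁ ⊗[ℂ] W₂) := by
    haveI := IsSimpleModule.nontrivial A₁ ↥S
    haveI := IsSimpleModule.nontrivial A₂ ↥T
    obtain ⟨s0, hs0⟩ := exists_ne (0 : ↥S)
    obtain ⟨t0, ht0⟩ := exists_ne (0 : ↥T)
    refine ⟨(s0 : W₁) ⊗ₜ[ℂ] (t0 : W₂),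
      Submodule.subset_span (Set.mem_image2_of_mem s0.2 t0.2), ?_⟩
    exact tmul_ne_zero'' (fun h => hs0 (Subtype.ext h)) (fun h => ht0 (Subtype.ext h))
  constructor
  · intro h
    obtain ⟨y, hy, hy0⟩ := hne
    rw [h] at hy
    exact hy0 ((Submodule.mem_bot _).mp hy)
  · intro b hb
    by_contra hb0
    obtain ⟨y, hyb, hy0⟩ := (Submodule.ne_bot_iff b).mp hb0
    have h1 : PT hsmul S T ≤ Submodule.span (A₁ ⊗[ℂ] A₂) {y} := key y (hb.le hyb) hy0
    have h2 : Submodule.span (A₁ ⊗[ℂ] A₂) {y} ≤ b :=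
      Submodule.span_le.mpr (by simpa using hyb)
    exact absurd (h1.trans h2) hb.not_ge

end Tensor

end AuxiliaryLemmas

/-- Algebraic core of the 'if' direction of Theorem 6.3: for unital associative
ℂ-algebras `A₁`, `A₂` of countable ℂ-dimension, the tensor product of a semisimple
`A₁`-module and a semisimple `A₂`-module is a semisimple `A₁ ⊗[ℂ] A₂`-module
(for the componentwise action). -/
theorem tensorProduct_isSemisimpleModule {A₁ A₂ W₁ W₂ : Type*}
    [Ring A₁] [Algebra ℂ A₁] [Ring A₂] [Algebra ℂ A₂]
    [AddCommGroup W₁] [Module ℂ W₁] [Module A₁ W₁] [IsScalarTower ℂ A₁ W₁]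
    [AddCommGroup W₂] [Module ℂ W₂] [Module A₂ W₂] [IsScalarTower ℂ A₂ W₂]
    (hA₁ : Module.rank ℂ A₁ ≤ ℵ₀) (hA₂ : Module.rank ℂ A₂ ≤ ℵ₀)
    (hW₁ : IsSemisimpleModule A₁ W₁) (hW₂ : IsSemisimpleModule A₂ W₂)
    [Module (A₁ ⊗[ℂ] A₂) (W₁ ⊗[ℂ] W₂)]
    (hsmul : ∀ (a₁ : A₁) (a₂ : A₂) (w₁ : W₁) (w₂ : W₂),
      (a₁ ⊗ₜ[ℂ] a₂) • (w₁ ⊗ₜ[ℂ] w₂) = (a₁ • w₁) ⊗ₜ[ℂ] (a₂ • w₂)) :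
    IsSemisimpleModule (A₁ ⊗[ℂ] A₂) (W₁ ⊗[ℂ] W₂) := by
  classical
  set P : {S : Submodule A₁ W₁ // IsSimpleModule A₁ ↥S} ×
      {T : Submodule A₂ W₂ // IsSimpleModule A₂ ↥T} →
      Submodule (A₁ ⊗[ℂ] A₂) (W₁ ⊗[ℂ] W₂) := fun p => PT hsmul p.1.1 p.2.1 with hP
  have hsimple : ∀ p, IsSimpleModule (A₁ ⊗[ℂ] A₂) ↥(P p) := fun p =>
    isSimpleModule_iff_isAtom.mpr (PT_isAtom hsmul hA₁ hA₂ _ _ p.1.2 p.2.2)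
  refine isSemisimpleModule_of_isSemisimpleModule_submodule' (p := P) (fun p => ?_) ?_
  · haveI := hsimple p
    infer_instance
  · rw [eq_top_iff]
    rintro x -
    induction x using TensorProduct.induction_on with
    | zero => exact Submodule.zero_mem _
    | add x y hx hy => exact Submodule.add_mem _ hx hy
    | tmul w₁ w₂ =>
      have h1 : w₁ ∈ sSup {m : Submodule A₁ W₁ | IsSimpleModule A₁ ↥m} := by
        rw [sSup_simples_eq_top_iff_isSemisimpleModule.mpr hW₁]
        trivial
      rw [sSup_eq_iSup'] at h1
      refine Submodule.iSup_induction _ (motive := fun w => w ⊗ₜ[ℂ] w₂ ∈ ⨆ p, P p) h1 ?_ ?_ ?_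
      · rintro ⟨S, hS⟩ w₁' hw₁'
        have h2 : w₂ ∈ sSup {m : Submodule A₂ W₂ | IsSimpleModule A₂ ↥m} := by
          rw [sSup_simples_eq_top_iff_isSemisimpleModule.mpr hW₂]
          trivial
        rw [sSup_eq_iSup'] at h2
        refine Submodule.iSup_induction _ (motive := fun w => w₁' ⊗ₜ[ℂ] w ∈ ⨆ p, P p) h2 ?_ ?_ ?_
        · rintro ⟨T, hT⟩ w₂' hw₂'
          refine Submodule.mem_iSup_of_mem (⟨⟨S, hS⟩, ⟨T, hT⟩⟩ :
            {S : Submodule A₁ W₁ // IsSimpleModule A₁ ↥S} ×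
            {T : Submodule A₂ W₂ // IsSimpleModule A₂ ↥T}) ?_
          exact Submodule.subset_span (Set.mem_image2_of_mem hw₁' hw₂')
        · show w₁' ⊗ₜ[ℂ] (0 : W₂) ∈ ⨆ p, P p
          rw [TensorProduct.tmul_zero]
          exact Submodule.zero_mem _
        · intro y z hy hz
          rw [TensorProduct.tmul_add]
          exact Submodule.add_mem _ hy hz
      · show (0 : W₁) ⊗ₜ[ℂ] w₂ ∈ ⨆ p, P p
        rw [TensorProduct.zero_tmul]
        exact Submodule.zero_mem _
      · intro y z hy hz
        rw [TensorProduct.add_tmul]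
        exact Submodule.add_mem _ hy hz
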